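/- Let N, M be positive natural numbers and let B ∈ ℂ^{N×M} be a binary selection matrix. Then for X̂ ∈ ℂ^{N×N} and W ∈ ℂ^{M×M}, the equality X̂ = B·W·Bᴴ holds if and only if there exist matrices Ŝ ∈ ℂ^{N×N}, T̂ ∈ ℂ^{N×N}, Y ∈ ℂ^{N×M}, U ∈ ℂ^{N×N}, and V ∈ ℂ^{M×M} such that all four of the following hold: (C7a) the block matrix [[Ŝ, X̂, B], [X̂ᴴ, T̂, Y], [Bᴴ, Yᴴ, I_M]] is positive semidefinite; (C7b) Re(Tr(Ŝ)) − M ≤ 0; (C7c) the block matrix [[U, Y, B], [Yᴴ, V, W], [Bᴴ, Wᴴ, I_M]] is positive semidefinite; (C7d) Re(Tr(U)) − M ≤ 0. -/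

import Mathlib

open Matrix
open scoped ComplexOrder

section Aux

variable {n : Type*} [Fintype n] [DecidableEq n]

/-- If `H` is PSD and a diagonal entry vanishes, the whole corresponding column vanishes. -/
lemma psd_col_zero {H : Matrix n n ℂ} (hH : H.PosSemidef) {i : n} (hi : H i i = 0) :
    ∀ j, H j i = 0 := by
  have h0 : star (Pi.single i 1 : n → ℂ) ⬝ᵥ H *ᵥ (Pi.single i 1 : n → ℂ) = 0 := by
    simp [mulVec_single, dotProduct, Pi.single_apply, hi]
  have hcol := (hH.dotProduct_mulVec_zero_iff _).mp h0
  intro j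
  have := congrFun hcol j
  simpa [mulVec_single] using this

/-- A PSD matrix with trace of nonpositive real part is zero. -/
lemma psd_trace_zero {H : Matrix n n ℂ} (hH : H.PosSemidef) (ht : (Matrix.trace H).re ≤ 0) :
    H = 0 := by
  have hdiag : ∀ i, 0 ≤ H i i := fun i => by
    have := hH.dotProduct_mulVec_nonneg (Pi.single i 1)
    simpa [mulVec_single, dotProduct, Pi.single_apply] using this
  have hre : ∀ i, 0 ≤ (H i i).re := fun i => (Complex.le_def.mp (hdiag i)).1
  have him : ∀ i, (H i i).im = 0 := fun i => ((Complex.le_def.mp (hdiag i)).2).symm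
  have hsum : ∑ i, (H i i).re = (Matrix.trace H).re := by
    simp [Matrix.trace, Matrix.diag, Complex.re_sum]
  have hzero : ∀ i ∈ Finset.univ, (H i i).re = 0 := by
    rw [← Finset.sum_eq_zero_iff_of_nonneg (fun i _ => hre i)]
    exact le_antisymm (hsum ▸ ht) (Finset.sum_nonneg fun i _ => hre i)
  have hdz : ∀ i, H i i = 0 := fun i =>
    Complex.ext (by simpa using hzero i (Finset.mem_univ i)) (him i)
  ext j i
  simpa using psd_col_zero hH (hdz i) j

end Aux

/-- trace of `B * Bᴴ` for a binary selection matrix. -/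
lemma trace_BBH {N M : ℕ} (B : Matrix (Fin N) (Fin M) ℂ)
    (hbin : ∀ n m, B n m = 0 ∨ B n m = 1)
    (hcol : ∀ m, ∃! n, B n m = 1) :
    Matrix.trace (B * Bᴴ) = (M : ℂ) := by
  have h1 : Matrix.trace (B * Bᴴ) = ∑ m : Fin M, ∑ n : Fin N, B n m * star (B n m) := by
    rw [Matrix.trace, Finset.sum_comm]
    simp [Matrix.diag, Matrix.mul_apply, conjTranspose_apply]
  have hone : ∀ m : Fin M, ∑ n : Fin N, B n m * star (B n m) = 1 := by
    intro m
    obtain ⟨n₀, hn₀, huniq⟩ := hcol m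
    rw [Finset.sum_eq_single n₀]
    · simp [hn₀]
    · intro n _ hn
      rcases hbin n m with h | h
      · simp [h]
      · exact absurd (huniq n h) hn
    · simp
  rw [h1, Finset.sum_congr rfl fun m _ => hone m]
  simp

/-- Subtraction of block matrices. -/
lemma fromBlocks_sub' {l m n o α : Type*} [Sub α] (A : Matrix n l α) (B : Matrix n m α)
    (C : Matrix o l α) (D : Matrix o m α) (A' : Matrix n l α) (B' : Matrix n m α)
    (C' : Matrix o l α) (D' : Matrix o m α) :
    fromBlocks A B C D - fromBlocks A' B' C' D' =
      fromBlocks (A - A') (B - B') (C - C') (D - D') := by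
  ext (i | i) (j | j) <;> simp

/-- The Schur-complement reduction for a block matrix with identity bottom-right block. -/
lemma schur_reduce {p q : Type*} [Fintype p] [DecidableEq p] [Fintype q] [DecidableEq q]
    (P : Matrix p p ℂ) (Q : Matrix p q ℂ) :
    (Matrix.fromBlocks P Q Qᴴ (1 : Matrix q q ℂ)).PosSemidef ↔
      (P - Q * Qᴴ).PosSemidef := by
  haveI : Invertible (1 : Matrix q q ℂ) := invertibleOne
  rw [Matrix.PosDef.fromBlocks₂₂ P Q Matrix.PosDef.one, inv_one, Matrix.mul_one]

/-- Key extraction: a PSD block matrix whose `(1,1)` block is `S' - B·Bᴴ` with `Re tr S' ≤ M`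
forces the `(2,1)` block to vanish. -/
lemma key_extract {N M : ℕ} {p : Type*} [Fintype p] [DecidableEq p]
    (B : Matrix (Fin N) (Fin M) ℂ)
    (hbin : ∀ n m, B n m = 0 ∨ B n m = 1)
    (hcol : ∀ m, ∃! n, B n m = 1)
    (S' : Matrix (Fin N) (Fin N) ℂ) (X12 : Matrix (Fin N) p ℂ)
    (X21 : Matrix p (Fin N) ℂ) (T' : Matrix p p ℂ)
    (hpsd : (Matrix.fromBlocks (S' - B * Bᴴ) X12 X21 T').PosSemidef)
    (htr' : (Matrix.trace S').re - (M : ℝ) ≤ 0) : X21 = 0 := by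
  have htr : Matrix.trace (B * Bᴴ) = (M : ℂ) := trace_BBH B hbin hcol
  have h11 : (S' - B * Bᴴ).PosSemidef := by
    have hsub := hpsd.submatrix (Sum.inl : Fin N → Fin N ⊕ p)
    have he : (Matrix.fromBlocks (S' - B * Bᴴ) X12 X21 T').submatrix
        (Sum.inl : Fin N → Fin N ⊕ p) Sum.inl = S' - B * Bᴴ := by
      ext i j; simp
    rwa [he] at hsub
  have htrace : (Matrix.trace (S' - B * Bᴴ)).re ≤ 0 := by
    rw [Matrix.trace_sub, htr]
    simpa [Complex.sub_re] using htr'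
  have hz : S' - B * Bᴴ = 0 := psd_trace_zero h11 htrace
  ext k i
  have hdz : (Matrix.fromBlocks (S' - B * Bᴴ) X12 X21 T') (Sum.inl i) (Sum.inl i) = 0 := by
    simp [hz]
  simpa using psd_col_zero hpsd hdz (Sum.inr k)

theorem stmt_11 (N M : ℕ) (hN : 0 < N) (hM : 0 < M)
    (B : Matrix (Fin N) (Fin M) ℂ)
    (hbin : ∀ n m, B n m = 0 ∨ B n m = 1)
    (hcol : ∀ m, ∃! n, B n m = 1)
    (Xh : Matrix (Fin N) (Fin N) ℂ) (W : Matrix (Fin M) (Fin M) ℂ) :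
    Xh = B * W * Bᴴ ↔
      ∃ (S : Matrix (Fin N) (Fin N) ℂ) (T : Matrix (Fin N) (Fin N) ℂ)
        (Y : Matrix (Fin N) (Fin M) ℂ) (U : Matrix (Fin N) (Fin N) ℂ)
        (V : Matrix (Fin M) (Fin M) ℂ),
        (Matrix.fromBlocks
            (Matrix.fromBlocks S Xh Xhᴴ T)
            (Matrix.fromRows B Y)
            (Matrix.fromCols Bᴴ Yᴴ)
            (1 : Matrix (Fin M) (Fin M) ℂ)).PosSemidef ∧
        (Matrix.trace S).re - (M : ℝ) ≤ 0 ∧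
        (Matrix.fromBlocks
            (Matrix.fromBlocks U Y Yᴴ V)
            (Matrix.fromRows B W)
            (Matrix.fromCols Bᴴ Wᴴ)
            (1 : Matrix (Fin M) (Fin M) ℂ)).PosSemidef ∧
        (Matrix.trace U).re - (M : ℝ) ≤ 0 := by
  have htr : Matrix.trace (B * Bᴴ) = (M : ℂ) := trace_BBH B hbin hcol
  have hcc : ∀ {m' : ℕ} (A₁ : Matrix (Fin N) (Fin M) ℂ) (A₂ : Matrix (Fin m') (Fin M) ℂ),
      Matrix.fromCols A₁ᴴ A₂ᴴ = (Matrix.fromRows A₁ A₂)ᴴ := fun A₁ A₂ =>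
    (Matrix.conjTranspose_fromRows_eq_fromCols_conjTranspose A₁ A₂).symm
  have hQQ : ∀ {m' : ℕ} (A₁ : Matrix (Fin N) (Fin M) ℂ) (A₂ : Matrix (Fin m') (Fin M) ℂ),
      Matrix.fromRows A₁ A₂ * (Matrix.fromRows A₁ A₂)ᴴ =
        Matrix.fromBlocks (A₁ * A₁ᴴ) (A₁ * A₂ᴴ) (A₂ * A₁ᴴ) (A₂ * A₂ᴴ) := by
    intro m' A₁ A₂
    rw [Matrix.conjTranspose_fromRows_eq_fromCols_conjTranspose,
      Matrix.fromRows_mul_fromCols]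
  have e1 : B * W * Bᴴ = B * (B * Wᴴ)ᴴ := by
    rw [Matrix.conjTranspose_mul, Matrix.conjTranspose_conjTranspose, Matrix.mul_assoc]
  have e3 : (B * Wᴴ)ᴴ = W * Bᴴ := by
    rw [Matrix.conjTranspose_mul, Matrix.conjTranspose_conjTranspose]
  have e2 : (B * W * Bᴴ)ᴴ = (B * Wᴴ) * Bᴴ := by
    rw [e1, Matrix.conjTranspose_mul, Matrix.conjTranspose_conjTranspose]
  constructor
  · rintro rfl
    refine ⟨B * Bᴴ, (B * Wᴴ) * (B * Wᴴ)ᴴ, B * Wᴴ, B * Bᴴ, W * Wᴴ, ?_, ?_, ?_, ?_⟩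
    · rw [hcc, schur_reduce, hQQ, fromBlocks_sub', sub_self, sub_self,
        sub_eq_zero.mpr e1, sub_eq_zero.mpr (e2.trans (congrArg _ rfl)),
        Matrix.fromBlocks_zero]
      exact Matrix.PosSemidef.zero
    · rw [htr]; simp
    · rw [hcc, schur_reduce, hQQ, fromBlocks_sub', sub_self, sub_self, sub_self,
        sub_eq_zero.mpr e3, Matrix.fromBlocks_zero]
      exact Matrix.PosSemidef.zero
    · rw [htr]; simp
  · rintro ⟨S, T, Y, U, V, h1, h2, h3, h4⟩
    rw [hcc, schur_reduce, hQQ, fromBlocks_sub'] at h1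
    rw [hcc, schur_reduce, hQQ, fromBlocks_sub'] at h3
    have hX21 : Xhᴴ - Y * Bᴴ = 0 :=
      key_extract B hbin hcol S (Xh - B * Yᴴ) (Xhᴴ - Y * Bᴴ) (T - Y * Yᴴ) h1 h2
    have hY21 : Yᴴ - W * Bᴴ = 0 :=
      key_extract B hbin hcol U (Y - B * Wᴴ) (Yᴴ - W * Bᴴ) (V - W * Wᴴ) h3 h4
    have hXh : Xhᴴ = Y * Bᴴ := by rwa [sub_eq_zero] at hX21
    have hYh : Yᴴ = W * Bᴴ := by rwa [sub_eq_zero] at hY21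
    calc Xh = (Xhᴴ)ᴴ := (Matrix.conjTranspose_conjTranspose Xh).symm
      _ = (Y * Bᴴ)ᴴ := by rw [hXh]
      _ = B * Yᴴ := by rw [Matrix.conjTranspose_mul, Matrix.conjTranspose_conjTranspose]
      _ = B * (W * Bᴴ) := by rw [hYh]
      _ = B * W * Bᴴ := (Matrix.mul_assoc B W Bᴴ).symm
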